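/- arXiv:2408.04509 — 8 statements merged into one kernel-verified Lean document; each statement's English description precedes it below -/
import Mathlib

section
/- Let Π be an announcement, R a problem with two distinct outcomes x, y ∈ Π(R), and i an individual with x P_i y. Let φ and φ' be possible mechanisms that agree on all problems except R, with φ(R) = x and φ'(R) = y. If there exists a problem R' ≠ R differing from R only in individual i's preferences such that for all z ∈ X, x P_i z implies x P'_i z, and if φ' is strategy-proof, then φ is not strategy-proof. -/
def strictPref {X : Type} (r : X → X → Prop) (x y : X) : Prop := r x y ∧ ¬ r y x

/-- A mechanism is strategy-proof on the domain `Rs`. -/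
def StrategyProof {I X : Type} (Rs : Set (I → X → X → Prop))
    (φ : (I → X → X → Prop) → X) : Prop :=
  ∀ (i : I) (R R' : I → X → X → Prop), R ∈ Rs → R' ∈ Rs →
    (∀ j : I, j ≠ i → R j = R' j) → R i (φ R) (φ R')

theorem stmt2 {I X : Type} [Fintype I] [Fintype X]
    (Rs : Set (I → X → X → Prop))
    (hpref : ∀ R ∈ Rs, ∀ i : I, Transitive (R i) ∧ Total (R i))
    (Ann : (I → X → X → Prop) → Set X)
    (R : I → X → X → Prop) (hR : R ∈ Rs)
    (x y : X) (hxy : x ≠ y) (hx : x ∈ Ann R) (hy : y ∈ Ann R)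
    (i : I) (hPi : strictPref (R i) x y)
    (φ φ' : (I → X → X → Prop) → X)
    (hφ : ∀ S ∈ Rs, φ S ∈ Ann S) (hφ' : ∀ S ∈ Rs, φ' S ∈ Ann S)
    (hφR : φ R = x) (hφ'R : φ' R = y)
    (hagree : ∀ S : I → X → X → Prop, S ≠ R → φ S = φ' S)
    (hR' : ∃ R' ∈ Rs, R' ≠ R ∧ (∀ j : I, j ≠ i → R' j = R j) ∧
      ∀ z : X, strictPref (R i) x z → strictPref (R' i) x z)
    (hSP' : StrategyProof Rs φ') :
    ¬ StrategyProof Rs φ := by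
  obtain ⟨R', hR'mem, hne, hagreei, hmono⟩ := hR'
  intro hSP
  -- from SP of φ': i at R deviating to R'
  have h1 : R i y (φ' R') := by
    have := hSP' i R R' hR hR'mem (fun j hj => (hagreei j hj).symm)
    rwa [hφ'R] at this
  -- strict pref of x over φ' R' under R i
  have htrans := (hpref R hR i).1
  have hstrict : strictPref (R i) x (φ' R') := by
    refine ⟨htrans hPi.1 h1, fun h => ?_⟩
    exact hPi.2 (htrans h1 h)
  have hstrict' := hmono _ hstrict
  -- from SP of φ: i at R' deviating to R
  have h2 : R' i (φ R') x := by
    have := hSP i R' R hR'mem hR (fun j hj => hagreei j hj)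
    rwa [hφR] at this
  rw [hagree R' hne] at h2
  exact hstrict'.2 h2
end

section
/- In an arbitrary environment with a rich preference domain, at least three outcomes, and no pair of outcomes that all individuals are indifferent between, an announcement Π guarantees strategy-proofness if and only if Π is fully transparent and its unique possible mechanism is strategy-proof. In particular, no opaque announcement guarantees strategy-proofness. -/
/-- Richness of the preference domain. -/
def Rich {I X : Type} [DecidableEq I] (Rs : Set (I → X → X → Prop)) : Prop :=
  ∀ R ∈ Rs, ∀ (i : I) (x y : X), strictPref (R i) x y →
    ∃ Ri' : X → X → Prop, Ri' ≠ R i ∧ Function.update R i Ri' ∈ Rs ∧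
      ∀ z : X, strictPref (R i) x z → strictPref Ri' x z

/-- an announcement guarantees strategy-proofness iff it is fully
transparent and its unique possible mechanism is strategy-proof; in particular,
no opaque announcement guarantees strategy-proofness. -/
theorem stmt3 {I X : Type} [DecidableEq I] [Fintype I] [Fintype X]
    (hX : 3 ≤ Fintype.card X)
    (Rs : Set (I → X → X → Prop))
    (hrich : Rich Rs)
    (hpref : ∀ R ∈ Rs, ∀ i : I, Transitive (R i) ∧ Total (R i))
    (hnoindiff : ∀ R ∈ Rs, ∀ x y : X, x ≠ y →
      ∃ i : I, strictPref (R i) x y ∨ strictPref (R i) y x)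
    (Ann : (I → X → X → Prop) → Set X)
    (hne : ∀ R ∈ Rs, (Ann R).Nonempty) :
    ((∀ φ : (I → X → X → Prop) → X, (∀ R ∈ Rs, φ R ∈ Ann R) → StrategyProof Rs φ) ↔
      ((∀ R ∈ Rs, ∃ x : X, Ann R = {x}) ∧
        ∀ φ : (I → X → X → Prop) → X, (∀ R ∈ Rs, φ R ∈ Ann R) → StrategyProof Rs φ)) ∧
    ((¬ ∀ R ∈ Rs, ∃ x : X, Ann R = {x}) →
      ∃ φ : (I → X → X → Prop) → X, (∀ R ∈ Rs, φ R ∈ Ann R) ∧ ¬ StrategyProof Rs φ) := by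
  classical
  have hXne : Nonempty X := by
    have : 0 < Fintype.card X := by omega
    exact Fintype.card_pos_iff.mp this
  have key : (∀ φ : (I → X → X → Prop) → X, (∀ R ∈ Rs, φ R ∈ Ann R) → StrategyProof Rs φ) →
      ∀ R ∈ Rs, ∃ x : X, Ann R = {x} := by
    intro hSP R hR
    by_contra hcon
    obtain ⟨x0, hx0⟩ := hne R hR
    have hy0 : ∃ y ∈ Ann R, y ≠ x0 := by
      by_contra h
      push_neg at h
      exact hcon ⟨x0, Set.eq_singleton_iff_unique_mem.mpr ⟨hx0, fun z hz => h z hz⟩⟩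
    obtain ⟨y0, hy0, hy0ne⟩ := hy0
    have main : ∀ x y : X, x ∈ Ann R → y ∈ Ann R → ∀ i : I, strictPref (R i) x y → False := by
      intro x y hx hy i hxy
      obtain ⟨Ri', hRi'ne, hR'mem, hmono⟩ := hrich R hR i x y hxy
      set R' := Function.update R i Ri' with hR'def
      obtain ⟨a, ha⟩ := hne R' hR'mem
      have hR'ne : R' ≠ R := by
        intro h
        apply hRi'ne
        have := congrFun h i
        simpa [hR'def] using this
      have hagree : ∀ j : I, j ≠ i → R j = R' j := by
        intro j hj
        simp [hR'def, Function.update_of_ne hj]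
      have hagree' : ∀ j : I, j ≠ i → R' j = R j := fun j hj => (hagree j hj).symm
      set φ0 : (I → X → X → Prop) → X := fun S =>
        if hS : S ∈ Rs then (hne S hS).choose else Classical.arbitrary X with hφ0
      have hφ0p : ∀ S ∈ Rs, φ0 S ∈ Ann S := by
        intro S hS
        simp only [hφ0, dif_pos hS]
        exact (hne S hS).choose_spec
      have mk : ∀ b : X, b ∈ Ann R →
          (fun S => if S = R then b else if S = R' then a else φ0 S) R = b ∧
          (fun S => if S = R then b else if S = R' then a else φ0 S) R' = a ∧
          (∀ S ∈ Rs, (fun S => if S = R then b else if S = R' then a else φ0 S) S ∈ Ann S) := by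
        intro b hb
        refine ⟨by simp, by simp [hR'ne], ?_⟩
        intro S hS
        by_cases h1 : S = R
        · subst h1; simpa using hb
        · by_cases h2 : S = R'
          · subst h2; simpa [hR'ne] using ha
          · simp only [if_neg h1, if_neg h2]
            exact hφ0p S hS
      obtain ⟨hφR, hφR', hφp⟩ := mk y hy
      obtain ⟨hψR, hψR', hψp⟩ := mk x hx
      have h1 : R i y a := by
        have := hSP _ hφp i R R' hR hR'mem hagree
        simpa [hR'ne] using this
      have h2 : R i x a := by
        have := hSP _ hψp i R R' hR hR'mem hagree
        simpa [hR'ne] using this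
      have h3 : Ri' a x := by
        have := hSP _ hψp i R' R hR'mem hR hagree'
        simp only [if_pos rfl, if_neg hR'ne] at this
        simpa [hR'def] using this
      have hnsxa : ¬ strictPref (R i) x a := fun h => (hmono a h).2 h3
      have hax : R i a x := by
        by_contra h
        exact hnsxa ⟨h2, h⟩
      exact hxy.2 ((hpref R hR i).1 h1 hax)
    obtain ⟨i, hi⟩ := hnoindiff R hR y0 x0 hy0ne
    cases hi with
    | inl h => exact main y0 x0 hy0 hx0 i h
    | inr h => exact main x0 y0 hx0 hy0 i h
  constructor
  · constructor
    · intro h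
      exact ⟨key h, h⟩
    · exact fun h => h.2
  · intro hopaque
    by_contra h
    push_neg at h
    exact hopaque (key (fun φ hφ => by
      by_contra hnsp
      exact hnsp (h φ hφ)))
end

section
/- If an opaque announcement Π has a problem R with two distinct outcomes x, y ∈ Π(R) where some individual i satisfies x P_i y, and the domain is rich, then Π does not guarantee strategy-proofness: there exists a possible mechanism given Π that is not strategy-proof. -/
/-- an opaque announcement with two comparably ranked possible outcomes
at some problem does not guarantee strategy-proofness. -/
theorem stmt4 {I X : Type} [DecidableEq I] [Fintype I] [Fintype X]
    (Rs : Set (I → X → X → Prop))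
    (hrich : Rich Rs)
    (hpref : ∀ R ∈ Rs, ∀ i : I, Transitive (R i) ∧ Total (R i))
    (Ann : (I → X → X → Prop) → Set X)
    (hne : ∀ R ∈ Rs, (Ann R).Nonempty)
    (R : I → X → X → Prop) (hR : R ∈ Rs)
    (x y : X) (hxy : x ≠ y) (hx : x ∈ Ann R) (hy : y ∈ Ann R)
    (i : I) (hPi : strictPref (R i) x y) :
    ∃ φ : (I → X → X → Prop) → X,
      (∀ S ∈ Rs, φ S ∈ Ann S) ∧ ¬ StrategyProof Rs φ := by
  classical
  obtain ⟨Ri', hne', hR'mem, hpres⟩ := hrich R hR i x y hPi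
  set R' := Function.update R i Ri' with hR'def
  have hR'i : R' i = Ri' := Function.update_self i Ri' R
  have hRR' : R' ≠ R := by
    intro h
    exact hne' (by rw [← hR'i, h])
  obtain ⟨z, hz⟩ := hne R' hR'mem
  set φ : (I → X → X → Prop) → X := fun S =>
    if S = R then (if R i y z then x else y)
    else if S = R' then z
    else if h : (Ann S).Nonempty then h.choose else z with hφ
  refine ⟨φ, ?_, ?_⟩
  · intro S hS
    by_cases h1 : S = R
    · subst h1
      simp only [hφ, if_pos rfl]
      split <;> assumption
    · by_cases h2 : S = R'
      · subst h2
        simpa [hφ, h1] using hz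
      · have hSne := hne S hS
        simp only [hφ, if_neg h1, if_neg h2, dif_pos hSne]
        exact hSne.choose_spec
  · intro hSP
    have hφR' : φ R' = z := by simp [hφ, hRR']
    have hcomm : ∀ j : I, j ≠ i → R' j = R j := fun j hj =>
      Function.update_of_ne hj _ _
    by_cases hyz : R i y z
    · have hφR : φ R = x := by simp [hφ, hyz]
      have hxz : strictPref (R i) x z := by
        obtain ⟨htr, htot⟩ := hpref R hR i
        refine ⟨htr hPi.1 hyz, fun hzx => hPi.2 (htr hyz hzx)⟩
      have hxz' := hpres z hxz
      have h2 := hSP i R' R hR'mem hR hcomm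
      rw [hφR', hφR, hR'i] at h2
      exact hxz'.2 h2
    · have hφR : φ R = y := by simp [hφ, hyz]
      have h2 := hSP i R R' hR hR'mem (fun j hj => (hcomm j hj).symm)
      rw [hφR', hφR] at h2
      exact hyz h2
end

section
/- In the single-individual environment with strict preferences over X = {x_1, …, x_N} (N ≥ 3), define for each strict ranking P ≠ P̄ (where P̄ ranks x_1 P̄ x_2 P̄ … P̄ x_N) the set X(P) of outcomes whose rank strictly improves under P relative to P̄, and let x(P) be the P-highest-ranked element of X(P). Then the announcement Π with Π(P̄) = {x_{N-1}, x_N} and Π(P) = {x(P)} for P ≠ P̄ is opaque and guarantees weak Maskin monotonicity. -/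
/-- A strict linear order (strict total order) on `X`. -/
def SLO {X : Type} (P : X → X → Prop) : Prop :=
  (∀ x y : X, x ≠ y → P x y ∨ P y x) ∧ Transitive P ∧ Irreflexive P

/-- The reference ranking `P̄`: `x_1 P̄ x_2 P̄ … P̄ x_N` (0-indexed: smaller index preferred). -/
def Pbar {N : ℕ} : Fin N → Fin N → Prop := fun a b => a < b

/-- The rank of `x` under `P`: the number of outcomes strictly preferred to `x`. -/
noncomputable def rankOf {N : ℕ} (P : Fin N → Fin N → Prop) (x : Fin N) : ℕ :=
  Nat.card {y : Fin N // P y x}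

/-- `x` strictly improves its rank under `P` relative to `P̄`. -/
def improves {N : ℕ} (P : Fin N → Fin N → Prop) (x : Fin N) : Prop :=
  rankOf P x < rankOf (Pbar (N := N)) x

/-- `z` is `x(P)`: the `P`-most-preferred outcome among those whose rank improved. -/
def topImproved {N : ℕ} (P : Fin N → Fin N → Prop) (z : Fin N) : Prop :=
  improves P z ∧ ∀ w : Fin N, improves P w → ¬ P w z

/-- The announcement: `{x_{N-1}, x_N}` at `P̄` (here `a, b`), and `{x(P)}` otherwise. -/
def Ann6 {N : ℕ} (a b : Fin N) (P : Fin N → Fin N → Prop) : Set (Fin N) :=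
  if P = Pbar then {a, b} else {z | topImproved P z}


lemma rank_eq_ncard {N : ℕ} (P : Fin N → Fin N → Prop) (x : Fin N) :
    rankOf P x = {y | P y x}.ncard := (Nat.card_coe_set_eq _).symm ▸ rfl

lemma slo_compl {N : ℕ} {P : Fin N → Fin N → Prop} (hP : SLO P) (x : Fin N) :
    {y | P y x} = (insert x {y | P x y})ᶜ := by
  obtain ⟨htot, htr, hirr⟩ := hP
  ext y
  simp only [Set.mem_setOf_eq, Set.mem_compl_iff, Set.mem_insert_iff, not_or]
  constructor
  · intro h
    refine ⟨fun he => hirr x (he ▸ h), fun h2 => hirr x (htr h2 h)⟩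
  · rintro ⟨hne, h2⟩
    rcases htot x y (fun he => hne he.symm) with h | h
    · exact absurd h h2
    · exact h

lemma slo_count {N : ℕ} {P : Fin N → Fin N → Prop} (hP : SLO P) (x : Fin N) :
    rankOf P x + {y | P x y}.ncard + 1 = N := by
  have h1 := Set.ncard_add_ncard_compl (insert x {y | P x y})
  rw [Set.ncard_insert_of_notMem (s := {y | P x y}) (fun h => hP.2.2 x h) (Set.toFinite _)] at h1
  rw [rank_eq_ncard, slo_compl hP x]
  simp only [Nat.card_eq_fintype_card, Fintype.card_fin] at h1 ⊢
  omega

lemma slo_pbar {N : ℕ} : SLO (Pbar (N := N)) :=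
  ⟨fun x y h => lt_or_gt_of_ne h, fun _ _ _ => lt_trans, fun x => lt_irrefl x⟩

lemma rank_pbar {N : ℕ} (x : Fin N) : rankOf (Pbar (N := N)) x = x.val := by
  unfold rankOf Pbar
  have e : {y : Fin N // y < x} ≃ Fin x.val :=
    { toFun := fun y => ⟨y.1.val, y.2⟩
      invFun := fun i => ⟨⟨i.val, lt_trans i.isLt x.isLt⟩, i.isLt⟩
      left_inv := fun y => rfl
      right_inv := fun i => rfl }
  rw [Nat.card_congr e]
  simp

lemma rank_mono {N : ℕ} {P P' : Fin N → Fin N → Prop} (hP : SLO P) (hP' : SLO P')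
    (x : Fin N) (h : ∀ y, P x y → P' x y) : rankOf P' x ≤ rankOf P x := by
  have h1 := slo_count hP x
  have h2 := slo_count hP' x
  have h3 : {y | P x y}.ncard ≤ {y | P' x y}.ncard :=
    Set.ncard_le_ncard h (Set.toFinite _)
  omega

lemma slo_asymm {N : ℕ} {P : Fin N → Fin N → Prop} (hP : SLO P) {x y : Fin N}
    (h : P x y) : ¬ P y x := fun h2 => hP.2.2 x (hP.2.1 h h2)

theorem stmt6' {N : ℕ} (hN : 3 ≤ N) :
    (∃ P : Fin N → Fin N → Prop, SLO P ∧
      ¬ (Ann6 (⟨N - 2, Nat.sub_lt (by omega) (by omega)⟩ : Fin N) (⟨N - 1, Nat.sub_lt (by omega) (by omega)⟩ : Fin N) P).Subsingleton) ∧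
    (∀ φ : (Fin N → Fin N → Prop) → Fin N,
      (∀ P : Fin N → Fin N → Prop, SLO P →
        φ P ∈ Ann6 (⟨N - 2, Nat.sub_lt (by omega) (by omega)⟩ : Fin N) (⟨N - 1, Nat.sub_lt (by omega) (by omega)⟩ : Fin N) P) →
      ∀ P P' : Fin N → Fin N → Prop, SLO P → SLO P' →
        (∀ y : Fin N, P (φ P) y → P' (φ P) y) →
        (φ P' = φ P ∨ P' (φ P') (φ P))) := by
  set a : Fin N := ⟨N - 2, Nat.sub_lt (by omega) (by omega)⟩ with ha
  set b : Fin N := ⟨N - 1, Nat.sub_lt (by omega) (by omega)⟩ with hb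
  constructor
  · refine ⟨Pbar, slo_pbar, fun hsub => ?_⟩
    have hab : a = b := hsub (by rw [Ann6, if_pos rfl]; left; rfl)
      (by rw [Ann6, if_pos rfl]; right; rfl)
    rw [Fin.mk.injEq] at hab
    omega
  · intro φ hφ P P' hP hP' hmono
    by_cases heq : φ P' = φ P
    · exact Or.inl heq
    right
    by_contra hnot
    have hPzz' : P' (φ P) (φ P') :=
      ((hP'.1 (φ P) (φ P')) (fun h => heq h.symm)).resolve_right hnot
    by_cases hP'bar : P' = Pbar
    · -- P' = Pbar case: impossible unless P = Pbar (then φ P' = φ P)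
      by_cases hPbar : P = Pbar
      · exact heq (by rw [hPbar, hP'bar])
      · have hz := hφ P hP
        rw [Ann6, if_neg hPbar] at hz
        have himp : improves P (φ P) := hz.1
        have hmle : rankOf P' (φ P) ≤ rankOf P (φ P) := rank_mono hP hP' _ hmono
        rw [hP'bar] at hmle
        exact absurd himp (by rw [improves]; omega)
    · -- P' ≠ Pbar
      have hz' := hφ P' hP'
      rw [Ann6, if_neg hP'bar] at hz'
      obtain ⟨himp', htop'⟩ := hz'
      by_cases hPbar : P = Pbar
      · -- P = Pbar, so φ P ∈ {a, b}
        subst hPbar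
        have hz := hφ Pbar slo_pbar
        rw [Ann6, if_pos rfl] at hz
        simp only [Set.mem_insert_iff, Set.mem_singleton_iff] at hz
        have hsub : {y | Pbar (φ Pbar) y} ⊆ {y | P' (φ Pbar) y} := fun y hy => hmono y hy
        have hmle : rankOf P' (φ Pbar) ≤ rankOf (Pbar (N := N)) (φ Pbar) :=
          rank_mono slo_pbar hP' _ hmono
        rcases lt_or_eq_of_le hmle with hlt | heqr
        · exact htop' (φ Pbar) hlt hPzz'
        · -- rank equality: the sets of P'-worse elements coincide
          have h1 := slo_count slo_pbar (φ Pbar)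
          have h2 := slo_count hP' (φ Pbar)
          rw [heqr] at h2
          have hcard : {y | P' (φ Pbar) y}.ncard ≤ {y | Pbar (φ Pbar) y}.ncard := by omega
          have hset : {y | Pbar (φ Pbar) y} = {y | P' (φ Pbar) y} :=
            Set.eq_of_subset_of_ncard_le hsub hcard (Set.toFinite _)
          have hz'mem : (φ P') ∈ {y | P' (φ Pbar) y} := hPzz'
          rw [← hset] at hz'mem
          have hlt2 : (φ Pbar).val < (φ P').val := hz'mem
          rcases hz with hza | hzb
          · -- φ Pbar = a, so φ P' = b
            have hvala : (φ Pbar).val = N - 2 := by rw [hza]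
            have hz'b : φ P' = b := by
              apply Fin.ext
              have := (φ P').isLt
              show (φ P').val = N - 1
              omega
            -- show rankOf P' (φ P') = N - 1, contradicting improves
            have hall : ∀ y : Fin N, y ≠ φ P' → P' y (φ P') := by
              intro y hy
              by_cases hyz : y = φ Pbar
              · rw [hyz]; exact hPzz'
              · have hya : P' y (φ Pbar) := by
                  rcases hP'.1 y (φ Pbar) hyz with h | h
                  · exact h
                  · exfalso
                    have hmem : y ∈ {w | Pbar (φ Pbar) w} := hset ▸ h
                    have hlt3 : (φ Pbar).val < y.val := hmem
                    have := y.isLt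
                    exact hy (Fin.ext (by rw [hz'b]; show y.val = N - 1; omega))
                exact hP'.2.1 hya hPzz'
            have hseta : {y | P' y (φ P')} = {(φ P')}ᶜ := by
              ext y
              simp only [Set.mem_setOf_eq, Set.mem_compl_iff, Set.mem_singleton_iff]
              exact ⟨fun h he => hP'.2.2 _ (he ▸ h), hall y⟩
            have hr : rankOf P' (φ P') = N - 1 := by
              rw [rank_eq_ncard, hseta]
              have := Set.ncard_add_ncard_compl ({(φ P')} : Set (Fin N))
              rw [Set.ncard_singleton] at this
              simp only [Nat.card_eq_fintype_card, Fintype.card_fin] at this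
              omega
            have himp2 := himp'
            rw [improves, rank_pbar, hr, hz'b] at himp2
            simp only [hb] at himp2
            omega
          · -- φ Pbar = b: nothing is below b under Pbar, contradiction
            have hvalb : (φ Pbar).val = N - 1 := by rw [hzb]
            have := (φ P').isLt
            omega
      · -- P ≠ Pbar: φ P improves under P, hence under P'
        have hz := hφ P hP
        rw [Ann6, if_neg hPbar] at hz
        have himp : improves P (φ P) := hz.1
        have hmle : rankOf P' (φ P) ≤ rankOf P (φ P) := rank_mono hP hP' _ hmono
        have himp2 : improves P' (φ P) := by rw [improves] at himp ⊢; omega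
        exact htop' (φ P) himp2 hPzz'

/-- the announcement `Π` (with `Π(P̄) = {x_{N-1}, x_N}` and
`Π(P) = {x(P)}` for `P ≠ P̄`) is opaque and guarantees weak Maskin monotonicity. -/
theorem stmt6 {N : ℕ} (hN : 3 ≤ N) :
    (∃ P : Fin N → Fin N → Prop, SLO P ∧
      ¬ (Ann6 (⟨N - 2, by omega⟩ : Fin N) (⟨N - 1, by omega⟩ : Fin N) P).Subsingleton) ∧
    (∀ φ : (Fin N → Fin N → Prop) → Fin N,
      (∀ P : Fin N → Fin N → Prop, SLO P →
        φ P ∈ Ann6 (⟨N - 2, by omega⟩ : Fin N) (⟨N - 1, by omega⟩ : Fin N) P) →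
      -- weak Maskin monotonicity of φ on the domain of strict linear orders
      ∀ P P' : Fin N → Fin N → Prop, SLO P → SLO P' →
        (∀ y : Fin N, P (φ P) y → P' (φ P) y) →
        (φ P' = φ P ∨ P' (φ P') (φ P))) := by
  exact stmt6' hN
end

section
/- In the single-individual setting with strict preferences: if P ≠ P̄ and P' ≠ P̄ and P' is a monotonic transformation of P at x(P), then x(P) ∈ X(P') and x(P') is weakly P'-preferred to x(P). -/
/-- if `P, P' ≠ P̄` and `P'` is a monotonic transformation of `P` at
`x(P)`, then `x(P) ∈ X(P')` and `x(P')` is weakly `P'`-preferred to `x(P)`. -/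
theorem stmt9 {N : ℕ} (P P' : Fin N → Fin N → Prop) (hP : SLO P) (hP' : SLO P')
    (hPne : P ≠ Pbar) (hP'ne : P' ≠ Pbar)
    (z : Fin N) (hz : topImproved P z)
    (hmt : ∀ y : Fin N, P z y → P' z y) :
    improves P' z ∧ ∀ w : Fin N, topImproved P' w → (w = z ∨ P' w z) := by
  obtain ⟨htot, htr, hirr⟩ := hP
  obtain ⟨htot', htr', hirr'⟩ := hP'
  -- {y // P' y z} embeds into {y // P y z}
  have hsub : ∀ y : Fin N, P' y z → P y z := by
    intro y hy
    have hne : y ≠ z := by rintro rfl; exact hirr' y hy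
    rcases htot y z hne with h | h
    · exact h
    · exact absurd (htr' (hmt y h) hy) (hirr' z)
  have hle : rankOf P' z ≤ rankOf P z := by
    have : Function.Injective (fun p : {y : Fin N // P' y z} =>
        (⟨p.1, hsub p.1 p.2⟩ : {y : Fin N // P y z})) := by
      intro a b hab
      simpa [Subtype.ext_iff] using hab
    exact Nat.card_le_card_of_injective _ this
  have himp : improves P' z := lt_of_le_of_lt hle hz.1
  refine ⟨himp, ?_⟩
  intro w hw
  by_cases hwz : w = z
  · exact Or.inl hwz
  · right
    rcases htot' w z hwz with h | h
    · exact h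
    · exact absurd h (hw.2 z himp)
end

section
/- In the single-individual setting with strict preferences: for any P' ≠ P̄, the reference ranking P̄ is not a monotonic transformation of P' at the outcome x(P'). -/
/-- for `P' ≠ P̄`, the ranking `P̄` is not a monotonic
transformation of `P'` at `x(P')`. -/
theorem stmt10 {N : ℕ} (P' : Fin N → Fin N → Prop) (hP' : SLO P') (hne : P' ≠ Pbar)
    (z : Fin N) (hz : topImproved P' z) :
    ¬ ∀ y : Fin N, P' z y → Pbar z y := by
  intro h
  obtain ⟨himp, -⟩ := hz
  have hsub : ∀ y : Fin N, Pbar y z → P' y z := by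
    intro y hyz
    have hne' : y ≠ z := ne_of_lt hyz
    rcases hP'.1 y z hne' with h1 | h2
    · exact h1
    · exact absurd (h y h2) (lt_asymm hyz)
  have hle : rankOf (Pbar (N := N)) z ≤ rankOf P' z := by
    apply Nat.card_le_card_of_injective
      (f := fun p : {y : Fin N // Pbar y z} => (⟨p.1, hsub p.1 p.2⟩ : {y : Fin N // P' y z}))
    intro a b hab
    simp only [Subtype.mk.injEq] at hab
    exact Subtype.ext hab
  exact absurd himp (not_lt.mpr hle)
end

section
/- In any environment satisfying the condition of the previous statement (two outcomes x, y strictly ranked by every individual at every problem) with |𝓡| ≥ 1, there exists an opaque announcement that guarantees non-bossiness, namely Π(R) = {x, y} for all R. -/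
/-- Non-bossiness: if a change in `i`'s report matters (strictly) to some `j ≠ i`,
then it matters (strictly) to `i` as well. -/
def NonBossy {I X : Type} (Rs : Set (I → X → X → Prop))
    (φ : (I → X → X → Prop) → X) : Prop :=
  ∀ (i : I) (R R' : I → X → X → Prop), R ∈ Rs → R' ∈ Rs →
    (∀ j : I, j ≠ i → R j = R' j) →
    (∃ j : I, j ≠ i ∧
      (strictPref (R j) (φ R) (φ R') ∨ strictPref (R j) (φ R') (φ R))) →
    (strictPref (R i) (φ R) (φ R') ∨ strictPref (R i) (φ R') (φ R))

/-- in such an environment there exists an opaque announcement that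
guarantees non-bossiness, namely `Π(R) = {x, y}` for all `R`. -/
theorem stmt14 {I X : Type} (Rs : Set (I → X → X → Prop)) (hRs : Rs.Nonempty)
    (x y : X) (hxy : x ≠ y)
    (hranked : ∀ R ∈ Rs, ∀ i : I, strictPref (R i) x y ∨ strictPref (R i) y x) :
    ∃ Ann : (I → X → X → Prop) → Set X,
      (∀ R ∈ Rs, (Ann R).Nonempty) ∧
      (∃ R ∈ Rs, ¬ (Ann R).Subsingleton) ∧
      (∀ φ : (I → X → X → Prop) → X, (∀ R ∈ Rs, φ R ∈ Ann R) → NonBossy Rs φ) := by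
  refine ⟨fun _ => {x, y}, fun R _ => ⟨x, Or.inl rfl⟩,
    ⟨hRs.choose, hRs.choose_spec, fun h => hxy (h (Or.inl rfl) (Or.inr rfl))⟩,
    fun φ hφ i R R' hR hR' _ hj => ?_⟩
  obtain ⟨j, hji, hjs⟩ := hj
  have hne : φ R ≠ φ R' := by
    rintro h
    rw [h] at hjs
    rcases hjs with ⟨h1, h2⟩ | ⟨h1, h2⟩ <;> exact h2 h1
  have h1 := hφ R hR
  have h2 := hφ R' hR'
  have hi := hranked R hR i
  simp only [Set.mem_insert_iff, Set.mem_singleton_iff] at h1 h2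
  rcases h1 with h1 | h1 <;> rcases h2 with h2 | h2 <;> rw [h1, h2] at hne ⊢
  · exact absurd rfl hne
  · exact hi
  · exact hi.symm
  · exact absurd rfl hne
end

section
/- If an announcement Π guarantees strategy-proofness and 𝓡 is rich with no pair of outcomes indifferent for all individuals, then for every problem R and every pair of distinct outcomes x, y ∈ Π(R), every pair of possible mechanisms agreeing outside R cannot both be strategy-proof when one picks x and the other picks y at R; hence Π(R) is a singleton for all R. -/
lemma keyaux {I X : Type} [DecidableEq I]
    {Rs : Set (I → X → X → Prop)} (hrich : Rich Rs)
    {R : I → X → X → Prop} (hR : R ∈ Rs)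
    {i : I} (htrans : Transitive (R i))
    {x y : X} (hxy : strictPref (R i) x y)
    {φ φ' : (I → X → X → Prop) → X}
    (hagree : ∀ S ∈ Rs, S ≠ R → φ S = φ' S)
    (hφR : φ R = x) (hφ'R : φ' R = y)
    (hSP : StrategyProof Rs φ) (hSP' : StrategyProof Rs φ') : False := by
  obtain ⟨Ri', hnei, hR', hpres⟩ := hrich R hR i x y hxy
  set R' := Function.update R i Ri' with hR'def
  have hRne : R' ≠ R := by
    intro h
    apply hnei
    have := congrFun h i
    simpa [hR'def, Function.update_self] using this
  have hupd : ∀ j : I, j ≠ i → R j = R' j := by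
    intro j hj; exact (Function.update_of_ne hj _ _).symm
  have hupd' : ∀ j : I, j ≠ i → R' j = R j := by
    intro j hj; exact Function.update_of_ne hj _ _
  have ha : φ R' = φ' R' := hagree R' hR' hRne
  have h1 : R i x (φ R') := by
    have := hSP i R R' hR hR' hupd
    rwa [hφR] at this
  have h2' : Ri' (φ R') x := by
    have := hSP i R' R hR' hR hupd'
    rw [hφR] at this
    simpa [hR'def, Function.update_self] using this
  have h3 : R i y (φ R') := by
    have := hSP' i R R' hR hR' hupd
    rwa [hφ'R, ← ha] at this
  have h4 : R i (φ R') x := by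
    by_contra h
    exact (hpres (φ R') ⟨h1, h⟩).2 h2'
  exact hxy.2 (htrans h3 h4)

/-- if `Π` guarantees strategy-proofness on a rich domain with no
completely-indifferent pair of outcomes, then two possible mechanisms agreeing
outside a problem `R` and picking distinct `x, y ∈ Π(R)` at `R` cannot both be
strategy-proof; hence `Π(R)` is a singleton for every `R`. -/
theorem stmt17 {I X : Type} [DecidableEq I] [Fintype I] [Fintype X]
    (Rs : Set (I → X → X → Prop))
    (hrich : Rich Rs)
    (hpref : ∀ R ∈ Rs, ∀ i : I, Transitive (R i) ∧ Total (R i))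
    (hnoindiff : ∀ R ∈ Rs, ∀ x y : X, x ≠ y →
      ∃ i : I, strictPref (R i) x y ∨ strictPref (R i) y x)
    (Ann : (I → X → X → Prop) → Set X)
    (hne : ∀ R ∈ Rs, (Ann R).Nonempty)
    (hguar : ∀ φ : (I → X → X → Prop) → X,
      (∀ R ∈ Rs, φ R ∈ Ann R) → StrategyProof Rs φ) :
    (∀ R ∈ Rs, ∀ x y : X, x ∈ Ann R → y ∈ Ann R → x ≠ y →
      ∀ φ φ' : (I → X → X → Prop) → X,
        (∀ S ∈ Rs, φ S ∈ Ann S) → (∀ S ∈ Rs, φ' S ∈ Ann S) →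
        (∀ S ∈ Rs, S ≠ R → φ S = φ' S) → φ R = x → φ' R = y →
        ¬ (StrategyProof Rs φ ∧ StrategyProof Rs φ')) ∧
    (∀ R ∈ Rs, ∀ x y : X, x ∈ Ann R → y ∈ Ann R → x = y) := by
  classical
  have key : ∀ R ∈ Rs, ∀ x y : X, x ∈ Ann R → y ∈ Ann R → x ≠ y →
      ∀ φ φ' : (I → X → X → Prop) → X,
        (∀ S ∈ Rs, φ S ∈ Ann S) → (∀ S ∈ Rs, φ' S ∈ Ann S) →
        (∀ S ∈ Rs, S ≠ R → φ S = φ' S) → φ R = x → φ' R = y →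
        ¬ (StrategyProof Rs φ ∧ StrategyProof Rs φ') := by
    intro R hR x y hx hy hxy φ φ' hφ hφ' hagree hφR hφ'R ⟨hSP, hSP'⟩
    obtain ⟨i, hi⟩ := hnoindiff R hR x y hxy
    rcases hi with hi | hi
    · exact keyaux hrich hR (hpref R hR i).1 hi hagree hφR hφ'R hSP hSP'
    · exact keyaux hrich hR (hpref R hR i).1 hi
        (fun S hS hSR => (hagree S hS hSR).symm) hφ'R hφR hSP' hSP
  refine ⟨key, ?_⟩
  intro R hR x y hx hy
  by_contra hxy
  let ψ : (I → X → X → Prop) → X := fun S => if h : (Ann S).Nonempty then h.some else x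
  let φ : (I → X → X → Prop) → X := fun S => if S = R then x else ψ S
  let φ' : (I → X → X → Prop) → X := fun S => if S = R then y else ψ S
  have hψ : ∀ S ∈ Rs, ψ S ∈ Ann S := by
    intro S hS
    simp only [ψ, dif_pos (hne S hS)]
    exact (hne S hS).some_mem
  have hφ : ∀ S ∈ Rs, φ S ∈ Ann S := by
    intro S hS
    by_cases hSR : S = R
    · subst hSR; simpa [φ] using hx
    · simpa [φ, if_neg hSR] using hψ S hS
  have hφ' : ∀ S ∈ Rs, φ' S ∈ Ann S := by
    intro S hS
    by_cases hSR : S = R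
    · subst hSR; simpa [φ'] using hy
    · simpa [φ', if_neg hSR] using hψ S hS
  exact key R hR x y hx hy hxy φ φ' hφ hφ'
    (fun S _ hSR => by simp [φ, φ', if_neg hSR])
    (by simp [φ]) (by simp [φ'])
    ⟨hguar φ hφ, hguar φ' hφ'⟩
end
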